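/- Let G be a finite simple connected bipartite graph with parts of sizes n_1 and n_2, m edges, and maximum degree Δ. Then 2(n_2 − 1 + √(m − n_2 + 1))/√Δ ≤ E(G) ≤ 2√(n_1 · m). -/

import Mathlib

open Matrix Finset

/-- The square root of a positive semidefinite matrix, as defined in the older Mathlib
(`Matrix.PosSemidef.sqrt`, since removed). -/
noncomputable def Matrix.PosSemidef.sqrt {m : Type*} [Fintype m] [DecidableEq m]
    {A : Matrix m m ℝ} (hA : A.PosSemidef) : Matrix m m ℝ :=
  hA.1.eigenvectorUnitary.1 * diagonal ((↑) ∘ (√·) ∘ hA.1.eigenvalues) *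
    (star hA.1.eigenvectorUnitary : Matrix m m ℝ)

section psdsqrt
open scoped MatrixOrder
variable {N : Type*} [Fintype N] [DecidableEq N] {A : Matrix N N ℝ}

lemma Matrix.PosSemidef.sqrt_eq_cfcSqrt (hA : A.PosSemidef) : hA.sqrt = CFC.sqrt A := by
  rw [CFC.sqrt_eq_cfc, cfc_nnreal_eq_real _ A hA.nonneg, hA.1.cfc_eq]
  simp only [IsHermitian.cfc, Unitary.conjStarAlgAut_apply, Matrix.PosSemidef.sqrt]
  congr 3
  ext i
  simp [Real.coe_sqrt, Real.coe_toNNReal', hA.eigenvalues_nonneg i]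

lemma Matrix.PosSemidef.posSemidef_sqrt (hA : A.PosSemidef) : hA.sqrt.PosSemidef := by
  rw [hA.sqrt_eq_cfcSqrt]; exact (CFC.sqrt_nonneg A).posSemidef

lemma Matrix.PosSemidef.sq_sqrt (hA : A.PosSemidef) : hA.sqrt ^ 2 = A := by
  rw [hA.sqrt_eq_cfcSqrt]; exact CFC.sq_sqrt A hA.nonneg

lemma Matrix.PosSemidef.sqrt_mul_self (hA : A.PosSemidef) : hA.sqrt * hA.sqrt = A := by
  rw [hA.sqrt_eq_cfcSqrt]; exact CFC.sqrt_mul_sqrt_self A hA.nonneg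

lemma Matrix.PosSemidef.eq_sqrt_of_sq_eq {B : Matrix N N ℝ} (hB : B.PosSemidef)
    (hA : A.PosSemidef) (h : B ^ 2 = A) : B = hA.sqrt := by
  rw [hA.sqrt_eq_cfcSqrt]
  exact (CFC.sqrt_unique (by rw [← sq]; exact h) hB.nonneg).symm

end psdsqrt

/-- The energy of the vertex `i` of a finite simple graph `G`:
the `(i,i)` entry of `|A| = (A Aᴴ)^{1/2}`, where `A` is the adjacency matrix. -/
noncomputable def vertexEnergy {n : ℕ} (G : SimpleGraph (Fin n)) [DecidableRel G.Adj]
    (i : Fin n) : ℝ :=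
  (Matrix.posSemidef_self_mul_conjTranspose (G.adjMatrix ℝ)).sqrt i i

/-- The energy of a finite simple graph: the sum of the energies of its vertices. -/
noncomputable def graphEnergy {n : ℕ} (G : SimpleGraph (Fin n)) [DecidableRel G.Adj] : ℝ :=
  ∑ i, vertexEnergy G i

section generic

variable {N : Type*} [Fintype N] [DecidableEq N]

section spec
variable {A : Matrix N N ℝ} (hA : A.IsHermitian)

/-- The eigenvector unitary as a plain real matrix. -/
noncomputable def Uof : Matrix N N ℝ := hA.eigenvectorUnitary

lemma hU_star_mul : star (Uof hA) * (Uof hA) = 1 := by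
  simp [Uof, (Matrix.mem_unitaryGroup_iff').mp (hA.eigenvectorUnitary).2]

lemma spec_thm : A = Uof hA * diagonal hA.eigenvalues * star (Uof hA) := by
  have := hA.spectral_theorem
  simpa [Uof, Function.comp] using this

lemma conj_apply (d : N → ℝ) (v w : N) :
    (Uof hA * diagonal d * star (Uof hA)) v w = ∑ i, d i * (Uof hA v i * Uof hA w i) := by
  rw [Matrix.mul_apply]
  refine Finset.sum_congr rfl (fun i _ => ?_)
  rw [Matrix.mul_diagonal]
  simp only [Matrix.star_apply, star_trivial]
  ring

lemma conj_mul_conj (d e : N → ℝ) :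
    (Uof hA * diagonal d * star (Uof hA)) * (Uof hA * diagonal e * star (Uof hA))
      = Uof hA * diagonal (fun i => d i * e i) * star (Uof hA) := by
  have h := hU_star_mul hA
  calc (Uof hA * diagonal d * star (Uof hA)) * (Uof hA * diagonal e * star (Uof hA))
      = Uof hA * diagonal d * (star (Uof hA) * Uof hA) * diagonal e * star (Uof hA) := by
        simp only [mul_assoc]
    _ = Uof hA * (diagonal d * diagonal e) * star (Uof hA) := by
        rw [h]; simp only [mul_one, mul_assoc]
    _ = _ := by rw [diagonal_mul_diagonal]

lemma colsum (i : N) : ∑ v, (Uof hA v i)^2 = 1 := by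
  have h := congrFun (congrFun (hU_star_mul hA) i) i
  simp only [Matrix.mul_apply, Matrix.star_apply, star_trivial, Matrix.one_apply_eq] at h
  rw [← h]
  exact Finset.sum_congr rfl (fun v _ => (sq (Uof hA v i)).symm ▸ rfl)

lemma eig_rel (v i : N) :
    ∑ u, A v u * Uof hA u i = hA.eigenvalues i * Uof hA v i := by
  have hAU : A * Uof hA = Uof hA * diagonal hA.eigenvalues := by
    have h1 : (Uof hA * diagonal hA.eigenvalues * star (Uof hA)) * Uof hA
        = Uof hA * diagonal hA.eigenvalues := by
      rw [mul_assoc, hU_star_mul hA, mul_one]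
    rw [← spec_thm hA] at h1
    exact h1
  have h := congrFun (congrFun hAU v) i
  rw [Matrix.mul_apply] at h
  rw [h, Matrix.mul_diagonal]
  ring

/-- The absolute value matrix. -/
noncomputable def absM : Matrix N N ℝ :=
  Uof hA * diagonal (fun i => |hA.eigenvalues i|) * star (Uof hA)

lemma absM_posSemidef : (absM hA).PosSemidef := by
  have h1 : (diagonal (fun i => |hA.eigenvalues i| : N → ℝ)).PosSemidef :=
    posSemidef_diagonal_iff.mpr (fun i => abs_nonneg _)
  simpa [absM, Matrix.star_eq_conjTranspose, mul_assoc] using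
    h1.mul_mul_conjTranspose_same (Uof hA)

lemma absM_sq : absM hA ^ 2 = A * Aᴴ := by
  have hAe : Aᴴ = A := hA
  rw [pow_two, hAe, absM, conj_mul_conj hA]
  conv_rhs => rw [spec_thm hA]
  rw [conj_mul_conj hA]
  congr 2
  ext i
  simp [abs_mul_abs_self, ← pow_two]

lemma sqrt_eq_absM :
    (Matrix.posSemidef_self_mul_conjTranspose A).sqrt = absM hA :=
  ((absM_posSemidef hA).eq_sqrt_of_sq_eq
    (Matrix.posSemidef_self_mul_conjTranspose A) (absM_sq hA)).symm

lemma AA_eq_conj : A * A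
    = Uof hA * diagonal (fun i => hA.eigenvalues i * hA.eigenvalues i) * star (Uof hA) := by
  conv_lhs => rw [spec_thm hA]
  rw [conj_mul_conj hA]

end spec

lemma matrank_add_le (X Y : Matrix N N ℝ) : (X + Y).rank ≤ X.rank + Y.rank := by
  rw [Matrix.rank, Matrix.rank, Matrix.rank, Matrix.mulVecLin_add]
  have h : LinearMap.range (X.mulVecLin + Y.mulVecLin) ≤
      LinearMap.range X.mulVecLin ⊔ LinearMap.range Y.mulVecLin := by
    rintro x ⟨y, rfl⟩
    exact Submodule.mem_sup.mpr ⟨X.mulVecLin y, ⟨y, rfl⟩, Y.mulVecLin y, ⟨y, rfl⟩, rfl⟩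
  exact (Submodule.finrank_mono h).trans
    (Submodule.finrank_add_le_finrank_add_finrank _ _)

end generic

lemma sqrt_key {a b : ℝ} (ha : 1 ≤ a) (hb : 1 ≤ b) :
    1 + Real.sqrt (a + b - 1) ≤ Real.sqrt a + Real.sqrt b := by
  have h1 : 1 ≤ Real.sqrt a := by
    rw [show (1:ℝ) = Real.sqrt 1 by simp]; exact Real.sqrt_le_sqrt ha
  have h2 : 1 ≤ Real.sqrt b := by
    rw [show (1:ℝ) = Real.sqrt 1 by simp]; exact Real.sqrt_le_sqrt hb
  have hsa := Real.sq_sqrt (by linarith : (0:ℝ) ≤ a)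
  have hsb := Real.sq_sqrt (by linarith : (0:ℝ) ≤ b)
  have key : a + b - 1 ≤ (Real.sqrt a + Real.sqrt b - 1)^2 := by nlinarith
  have := Real.sqrt_le_sqrt key
  rwa [Real.sqrt_sq (by linarith), le_sub_iff_add_le, add_comm] at this

lemma sqrt_superadd {α : Type*} [DecidableEq α] (s : Finset α) (f : α → ℝ)
    (hf : ∀ v ∈ s, 1 ≤ f v) :
    (s.card : ℝ) - 1 + Real.sqrt ((∑ v ∈ s, f v) - s.card + 1) ≤ ∑ v ∈ s, Real.sqrt (f v) := by
  induction s using Finset.induction with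
  | empty => simp
  | @insert a s ha ih =>
      have hfa : 1 ≤ f a := hf a (Finset.mem_insert_self a s)
      have hf' : ∀ v ∈ s, 1 ≤ f v := fun v hv => hf v (Finset.mem_insert_of_mem hv)
      have hcard : (((insert a s).card : ℕ) : ℝ) = (s.card : ℝ) + 1 := by
        rw [Finset.card_insert_of_notMem ha]; push_cast; ring
      have hcs : (s.card : ℝ) ≤ ∑ v ∈ s, f v := by
        calc (s.card : ℝ) = ∑ _v ∈ s, (1:ℝ) := by simp
        _ ≤ _ := Finset.sum_le_sum hf'
      have hK : 1 ≤ (∑ v ∈ s, f v) - s.card + 1 := by linarith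
      have key := sqrt_key hfa hK
      have ih' := ih hf'
      rw [Finset.sum_insert ha, Finset.sum_insert ha, hcard]
      rw [show f a + ∑ v ∈ s, f v - ((s.card:ℝ) + 1) + 1
          = f a + ((∑ v ∈ s, f v) - s.card + 1) - 1 from by ring]
      linarith


section graph
variable {n : ℕ} (G : SimpleGraph (Fin n)) [DecidableRel G.Adj]

lemma adjHerm : (G.adjMatrix ℝ).IsHermitian := by
  show _ᴴ = _
  ext i j
  simp [Matrix.conjTranspose_apply, SimpleGraph.adjMatrix_apply, G.adj_comm]

lemma adj_sym (i j : Fin n) : G.adjMatrix ℝ i j = G.adjMatrix ℝ j i := by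
  simp [SimpleGraph.adjMatrix_apply, G.adj_comm]

lemma adj_nonneg (i j : Fin n) : 0 ≤ G.adjMatrix ℝ i j := by
  rw [SimpleGraph.adjMatrix_apply]; split <;> norm_num

lemma adj_le_one (i j : Fin n) : G.adjMatrix ℝ i j ≤ 1 := by
  rw [SimpleGraph.adjMatrix_apply]; split <;> norm_num

lemma adj_row_sum (v : Fin n) : ∑ u, G.adjMatrix ℝ v u = (G.degree v : ℝ) := by
  simp only [SimpleGraph.adjMatrix_apply, Finset.sum_boole]
  rw [SimpleGraph.degree, SimpleGraph.neighborFinset_eq_filter]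

lemma AA_vv (v : Fin n) :
    (G.adjMatrix ℝ * G.adjMatrix ℝ) v v = (G.degree v : ℝ) := by
  simpa using SimpleGraph.adjMatrix_mul_self_apply_self (α := ℝ) (G := G) v

lemma AA_sym (i j : Fin n) :
    (G.adjMatrix ℝ * G.adjMatrix ℝ) i j = (G.adjMatrix ℝ * G.adjMatrix ℝ) j i := by
  rw [Matrix.mul_apply, Matrix.mul_apply]
  exact Finset.sum_congr rfl fun k _ => by rw [adj_sym G i k, adj_sym G k j]; ring

lemma AA_nonneg (i j : Fin n) : 0 ≤ (G.adjMatrix ℝ * G.adjMatrix ℝ) i j := by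
  rw [Matrix.mul_apply]
  exact Finset.sum_nonneg fun k _ => mul_nonneg (adj_nonneg G i k) (adj_nonneg G k j)

lemma AA_le (v w : Fin n) :
    (G.adjMatrix ℝ * G.adjMatrix ℝ) v w ≤ (G.degree v : ℝ) := by
  rw [Matrix.mul_apply, ← adj_row_sum G v]
  refine Finset.sum_le_sum fun k _ => ?_
  calc G.adjMatrix ℝ v k * G.adjMatrix ℝ k w ≤ G.adjMatrix ℝ v k * 1 :=
        mul_le_mul_of_nonneg_left (adj_le_one G k w) (adj_nonneg G v k)
  _ = G.adjMatrix ℝ v k := mul_one _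

lemma AA_row_sum_le (v : Fin n) :
    ∑ w, (G.adjMatrix ℝ * G.adjMatrix ℝ) v w ≤ (G.degree v : ℝ) * (G.maxDegree : ℝ) := by
  simp only [Matrix.mul_apply]
  rw [Finset.sum_comm]
  calc ∑ u, ∑ w, G.adjMatrix ℝ v u * G.adjMatrix ℝ u w
      = ∑ u, G.adjMatrix ℝ v u * (G.degree u : ℝ) := by
        refine Finset.sum_congr rfl fun u _ => ?_
        rw [← Finset.mul_sum, adj_row_sum]
    _ ≤ ∑ u, G.adjMatrix ℝ v u * (G.maxDegree : ℝ) := by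
        refine Finset.sum_le_sum fun u _ => ?_
        exact mul_le_mul_of_nonneg_left
          (by exact_mod_cast G.degree_le_maxDegree u) (adj_nonneg G v u)
    _ = (G.degree v : ℝ) * (G.maxDegree : ℝ) := by rw [← Finset.sum_mul, adj_row_sum]

lemma pervertex (v : Fin n) :
    (G.degree v : ℝ) ≤ (vertexEnergy G v)^2 * (G.maxDegree : ℝ) := by
  classical
  have hP := Matrix.posSemidef_self_mul_conjTranspose (G.adjMatrix ℝ)
  set S : Matrix (Fin n) (Fin n) ℝ := hP.sqrt with hSdef
  have hEv : vertexEnergy G v = S v v := rfl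
  have hSpsd : S.PosSemidef := hP.posSemidef_sqrt
  have hSS : S * S = G.adjMatrix ℝ * G.adjMatrix ℝ := by
    have h := hP.sq_sqrt
    rw [pow_two] at h
    rw [← hSdef] at h
    rw [h, (adjHerm G).eq]
  set R : Matrix (Fin n) (Fin n) ℝ := hSpsd.sqrt with hRdef
  have hRR : R * R = S := hSpsd.sqrt_mul_self
  have hRherm : Rᴴ = R := by rw [hRdef]; exact hSpsd.posSemidef_sqrt.1
  have hSherm : Sᴴ = S := hSpsd.1
  clear_value S R
  clear hRdef hSdef
  have hRsym : ∀ i j : Fin n, R i j = R j i := by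
    intro i j
    conv_lhs => rw [← hRherm]
    simp [Matrix.conjTranspose_apply]
  have hSsym : ∀ i j : Fin n, S i j = S j i := by
    intro i j
    conv_lhs => rw [← hSherm]
    simp [Matrix.conjTranspose_apply]
  have hcomm : S * R = R * S := by rw [← hRR]; exact mul_assoc R R R
  have hRS_sym : ∀ i j : Fin n, (R * S) i j = (R * S) j i := by
    intro i j
    calc (R * S) i j = (S * R) j i := by
          rw [Matrix.mul_apply, Matrix.mul_apply]
          exact Finset.sum_congr rfl fun k _ => by rw [hRsym i k, hSsym k j]; ring
    _ = (R * S) j i := by rw [hcomm]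
  have hSS_sym : ∀ i j : Fin n, (S * S) i j = (S * S) j i := by
    intro i j
    rw [Matrix.mul_apply, Matrix.mul_apply]
    exact Finset.sum_congr rfl fun k _ => by rw [hSsym i k, hSsym k j]; ring
  -- Cauchy-Schwarz 1
  have hM2_eq : (S * S) v v = ∑ k, R k v * (R * S) k v := by
    have hassoc : S * S = R * (R * S) := by
      simp only [← hRR, mul_assoc]
    rw [hassoc, Matrix.mul_apply]
    exact Finset.sum_congr rfl fun k _ => by rw [hRsym v k]
  have hsum1 : ∑ k, (R k v)^2 = S v v := by
    conv_rhs => rw [← hRR]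
    rw [Matrix.mul_apply]
    exact Finset.sum_congr rfl fun k _ => by rw [hRsym v k]; ring
  have hsum2 : ∑ k, ((R * S) k v)^2 = (S * (S * S)) v v := by
    have h3 : (R * S) * (R * S) = S * (S * S) := by
      calc (R * S) * (R * S) = R * (S * R) * S := by simp only [mul_assoc]
        _ = R * (R * S) * S := by rw [hcomm]
        _ = (R * R) * (S * S) := by simp only [mul_assoc]
        _ = S * (S * S) := by rw [hRR]
    rw [← h3, Matrix.mul_apply]
    exact Finset.sum_congr rfl fun k _ => by rw [hRS_sym v k]; ring
  have cs1 : ((S * S) v v)^2 ≤ (S v v) * ((S * (S * S)) v v) := by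
    rw [hM2_eq, ← hsum1, ← hsum2]
    exact Finset.sum_mul_sq_le_sq_mul_sq univ _ _
  -- Cauchy-Schwarz 2
  have hM3_eq : (S * (S * S)) v v = ∑ k, S k v * ((S * S) k v) := by
    rw [Matrix.mul_apply]
    exact Finset.sum_congr rfl fun k _ => by rw [hSsym v k]
  have hsum3 : ∑ k, (S k v)^2 = (S * S) v v := by
    rw [Matrix.mul_apply]
    exact Finset.sum_congr rfl fun k _ => by rw [hSsym v k]; ring
  have hsum4 : ∑ k, ((S * S) k v)^2 = ((S * S) * (S * S)) v v := by
    rw [Matrix.mul_apply]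
    exact Finset.sum_congr rfl fun k _ => by rw [hSS_sym v k]; ring
  have cs2 : ((S * (S * S)) v v)^2 ≤ ((S * S) v v) * (((S * S) * (S * S)) v v) := by
    rw [hM3_eq, ← hsum3, ← hsum4]
    exact Finset.sum_mul_sq_le_sq_mul_sq univ _ _
  -- combinatorial bound
  have hQ : ((S * S) * (S * S)) v v ≤ (G.degree v : ℝ)^2 * (G.maxDegree : ℝ) := by
    rw [hSS]
    calc (G.adjMatrix ℝ * G.adjMatrix ℝ * (G.adjMatrix ℝ * G.adjMatrix ℝ)) v v
        = ∑ w, (G.adjMatrix ℝ * G.adjMatrix ℝ) v w * (G.adjMatrix ℝ * G.adjMatrix ℝ) w v := by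
          rw [Matrix.mul_apply]
      _ ≤ ∑ w, (G.degree v : ℝ) * (G.adjMatrix ℝ * G.adjMatrix ℝ) v w := by
          refine Finset.sum_le_sum fun w _ => ?_
          rw [AA_sym G w v]
          exact mul_le_mul_of_nonneg_right (AA_le G v w) (AA_nonneg G v w)
      _ = (G.degree v : ℝ) * ∑ w, (G.adjMatrix ℝ * G.adjMatrix ℝ) v w := by
          rw [Finset.mul_sum]
      _ ≤ (G.degree v : ℝ) * ((G.degree v : ℝ) * (G.maxDegree : ℝ)) := by
          exact mul_le_mul_of_nonneg_left (AA_row_sum_le G v) (Nat.cast_nonneg _)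
      _ = (G.degree v : ℝ)^2 * (G.maxDegree : ℝ) := by ring
  -- put it together
  have hdvv : (S * S) v v = (G.degree v : ℝ) := by rw [hSS, AA_vv]
  rw [hEv]
  set d : ℝ := (G.degree v : ℝ) with hd
  set E : ℝ := S v v with hE
  set T : ℝ := (S * (S * S)) v v with hT
  have hd0 : 0 ≤ d := Nat.cast_nonneg _
  have hE0 : 0 ≤ E := hSpsd.diag_nonneg
  rw [hdvv] at cs1 cs2
  -- cs1 : d^2 ≤ E * T ; cs2 : T^2 ≤ d * Q ; hQ : Q ≤ d^2 * Δ
  rcases eq_or_lt_of_le hd0 with h0 | hdpos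
  · rw [← h0]; positivity
  · have h4 : d^4 ≤ E^2 * T^2 := by
      calc d^4 = (d^2)^2 := by ring
        _ ≤ (E * T)^2 := by
            apply pow_le_pow_left₀ (sq_nonneg d) cs1
        _ = E^2 * T^2 := by ring
    have h5 : T^2 ≤ d * ((G.degree v : ℝ)^2 * (G.maxDegree : ℝ)) :=
      cs2.trans (mul_le_mul_of_nonneg_left hQ hd0)
    have h6 : d^4 ≤ E^2 * (G.maxDegree : ℝ) * d^3 := by
      calc d^4 ≤ E^2 * T^2 := h4
        _ ≤ E^2 * (d * (d^2 * (G.maxDegree : ℝ))) :=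
            mul_le_mul_of_nonneg_left (by rw [← hd] at h5; exact h5) (sq_nonneg E)
        _ = E^2 * (G.maxDegree : ℝ) * d^3 := by ring
    have h7 : d * d^3 ≤ (E^2 * (G.maxDegree : ℝ)) * d^3 := by
      calc d * d^3 = d^4 := by ring
        _ ≤ _ := h6
    exact le_of_mul_le_mul_right h7 (by positivity)

end graph


section bip
variable {n : ℕ} (G : SimpleGraph (Fin n)) [DecidableRel G.Adj]

lemma vertexEnergy_eq_absM (v : Fin n) :
    vertexEnergy G v = absM (adjHerm G) v v := by
  rw [vertexEnergy, sqrt_eq_absM (adjHerm G)]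

lemma vertexEnergy_nonneg (v : Fin n) : 0 ≤ vertexEnergy G v := by
  have hP := Matrix.posSemidef_self_mul_conjTranspose (G.adjMatrix ℝ)
  have hSpsd := hP.posSemidef_sqrt
  have h : 0 ≤ hP.sqrt v v := hSpsd.diag_nonneg
  refine h.trans_eq ?_
  rfl

lemma graphEnergy_eq_sum_abs :
    graphEnergy G = ∑ i, |(adjHerm G).eigenvalues i| := by
  rw [graphEnergy]
  calc ∑ v, vertexEnergy G v = ∑ v, ∑ i, |(adjHerm G).eigenvalues i| *
      (Uof (adjHerm G) v i * Uof (adjHerm G) v i) := by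
        refine Finset.sum_congr rfl fun v _ => ?_
        rw [vertexEnergy_eq_absM, absM, conj_apply]
    _ = ∑ i, |(adjHerm G).eigenvalues i| * ∑ v, (Uof (adjHerm G) v i)^2 := by
        rw [Finset.sum_comm]
        refine Finset.sum_congr rfl fun i _ => ?_
        rw [Finset.mul_sum]
        refine Finset.sum_congr rfl fun v _ => ?_
        ring
    _ = ∑ i, |(adjHerm G).eigenvalues i| := by
        refine Finset.sum_congr rfl fun i _ => ?_
        rw [colsum (adjHerm G) i, mul_one]

lemma sum_eigsq :
    ∑ i, ((adjHerm G).eigenvalues i)^2 = 2 * (G.edgeFinset.card : ℝ) := by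
  have h1 : ∑ v, (G.adjMatrix ℝ * G.adjMatrix ℝ) v v
      = ∑ i, ((adjHerm G).eigenvalues i)^2 := by
    calc ∑ v, (G.adjMatrix ℝ * G.adjMatrix ℝ) v v
        = ∑ v, ∑ i, ((adjHerm G).eigenvalues i * (adjHerm G).eigenvalues i) *
            (Uof (adjHerm G) v i * Uof (adjHerm G) v i) := by
          refine Finset.sum_congr rfl fun v _ => ?_
          rw [AA_eq_conj (adjHerm G), conj_apply]
      _ = ∑ i, ((adjHerm G).eigenvalues i * (adjHerm G).eigenvalues i) *
            ∑ v, (Uof (adjHerm G) v i)^2 := by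
          rw [Finset.sum_comm]
          refine Finset.sum_congr rfl fun i _ => ?_
          rw [Finset.mul_sum]
          refine Finset.sum_congr rfl fun v _ => ?_
          ring
      _ = ∑ i, ((adjHerm G).eigenvalues i)^2 := by
          refine Finset.sum_congr rfl fun i _ => ?_
          rw [colsum (adjHerm G) i, mul_one]
          ring
  have h2 : ∑ v, (G.adjMatrix ℝ * G.adjMatrix ℝ) v v = 2 * (G.edgeFinset.card : ℝ) := by
    calc ∑ v, (G.adjMatrix ℝ * G.adjMatrix ℝ) v v = ∑ v, (G.degree v : ℝ) := by
          exact Finset.sum_congr rfl fun v _ => AA_vv G v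
      _ = 2 * (G.edgeFinset.card : ℝ) := by
          rw [← Nat.cast_sum]
          rw [G.sum_degrees_eq_twice_card_edges]
          push_cast
          ring
  rw [← h1, h2]

variable (V₁ V₂ : Finset (Fin n)) (hdisj : Disjoint V₁ V₂)
  (hbip : ∀ u v : Fin n, G.Adj u v → (u ∈ V₁ ∧ v ∈ V₂) ∨ (u ∈ V₂ ∧ v ∈ V₁))

include hdisj hbip in
lemma adj_zero_of_snd_not_mem₁ {v u : Fin n} (hv : v ∈ V₂) (hu : u ∉ V₁) :
    G.adjMatrix ℝ v u = 0 := by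
  rw [SimpleGraph.adjMatrix_apply, if_neg]
  intro hadj
  rcases hbip v u hadj with ⟨h1, _⟩ | ⟨_, h2⟩
  · exact (Finset.disjoint_left.mp hdisj h1) hv
  · exact hu h2

include hdisj hbip in
lemma adj_zero_of_snd_not_mem₂ {v u : Fin n} (hv : v ∈ V₁) (hu : u ∉ V₂) :
    G.adjMatrix ℝ v u = 0 := by
  rw [SimpleGraph.adjMatrix_apply, if_neg]
  intro hadj
  rcases hbip v u hadj with ⟨_, h2⟩ | ⟨h1, _⟩
  · exact hu h2
  · exact (Finset.disjoint_left.mp hdisj hv) h1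

include hdisj hbip in
lemma eig_weight_eq (i : Fin n) :
    (adjHerm G).eigenvalues i * ∑ v ∈ V₂, (Uof (adjHerm G) v i)^2
      = (adjHerm G).eigenvalues i * ∑ v ∈ V₁, (Uof (adjHerm G) v i)^2 := by
  set ν := (adjHerm G).eigenvalues with hν
  set U := Uof (adjHerm G) with hU
  have key : ∀ (W W' : Finset (Fin n)),
      (∀ {v u : Fin n}, v ∈ W → u ∉ W' → G.adjMatrix ℝ v u = 0) →
      ν i * ∑ v ∈ W, (U v i)^2 = ∑ v ∈ W, ∑ u ∈ W', G.adjMatrix ℝ v u * (U v i * U u i) := by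
    intro W W' hzero
    rw [Finset.mul_sum]
    refine Finset.sum_congr rfl fun v hv => ?_
    have h1 : ν i * (U v i)^2 = U v i * (ν i * U v i) := by ring
    rw [h1, ← eig_rel (adjHerm G) v i, Finset.mul_sum]
    rw [show ∑ u, U v i * (G.adjMatrix ℝ v u * U u i)
        = ∑ u, G.adjMatrix ℝ v u * (U v i * U u i) from
      Finset.sum_congr rfl fun u _ => by ring]
    symm
    refine Finset.sum_subset (Finset.subset_univ W') fun u _ hu => ?_
    rw [hzero hv hu, zero_mul]
  rw [key V₂ V₁ (fun hv hu => adj_zero_of_snd_not_mem₁ G V₁ V₂ hdisj hbip hv hu),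
    key V₁ V₂ (fun hv hu => adj_zero_of_snd_not_mem₂ G V₁ V₂ hdisj hbip hv hu)]
  rw [Finset.sum_comm]
  refine Finset.sum_congr rfl fun u _ => Finset.sum_congr rfl fun v _ => ?_
  rw [adj_sym G v u]
  ring

include hdisj hbip in
lemma energy_half_split :
    ∑ v ∈ V₂, vertexEnergy G v = ∑ v ∈ V₁, vertexEnergy G v := by
  have habs : ∀ (W : Finset (Fin n)), ∑ v ∈ W, vertexEnergy G v
      = ∑ i, |(adjHerm G).eigenvalues i| * ∑ v ∈ W, (Uof (adjHerm G) v i)^2 := by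
    intro W
    calc ∑ v ∈ W, vertexEnergy G v
        = ∑ v ∈ W, ∑ i, |(adjHerm G).eigenvalues i| *
            (Uof (adjHerm G) v i * Uof (adjHerm G) v i) := by
          refine Finset.sum_congr rfl fun v _ => ?_
          rw [vertexEnergy_eq_absM, absM, conj_apply]
      _ = _ := by
          rw [Finset.sum_comm]
          refine Finset.sum_congr rfl fun i _ => ?_
          rw [Finset.mul_sum]
          exact Finset.sum_congr rfl fun v _ => by ring
  rw [habs V₁, habs V₂]
  refine Finset.sum_congr rfl fun i _ => ?_
  by_cases hν : (adjHerm G).eigenvalues i = 0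
  · rw [hν]; simp
  · have h := eig_weight_eq G V₁ V₂ hdisj hbip i
    have h2 := mul_left_cancel₀ hν h
    rw [h2]

include hdisj hbip in
lemma rank_le_two_card : (G.adjMatrix ℝ).rank ≤ 2 * V₁.card := by
  classical
  set ind : Fin n → ℝ := fun i => if i ∈ V₁ then 1 else 0 with hind
  set X : Matrix (Fin n) (Fin n) ℝ := Matrix.diagonal ind * G.adjMatrix ℝ with hX
  have hXA : G.adjMatrix ℝ = X + Xᵀ := by
    ext i j
    rw [Matrix.add_apply, hX, Matrix.transpose_apply, Matrix.diagonal_mul,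
      Matrix.diagonal_mul, adj_sym G j i]
    by_cases hadj : G.Adj i j
    · rcases hbip i j hadj with ⟨h1, h2⟩ | ⟨h1, h2⟩
      · rw [hind]
        simp only [if_pos h1, if_neg (Finset.disjoint_right.mp hdisj h2)]
        ring
      · rw [hind]
        simp only [if_neg (Finset.disjoint_right.mp hdisj h1), if_pos h2]
        ring
    · have : G.adjMatrix ℝ i j = 0 := by rw [SimpleGraph.adjMatrix_apply, if_neg hadj]
      rw [this]
      ring
  have hrankX : X.rank ≤ V₁.card := by
    refine (Matrix.rank_mul_le_left _ _).trans ?_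
    rw [Matrix.rank_diagonal]
    rw [Fintype.card_subtype]
    apply le_of_eq
    congr 1
    ext i
    rw [Finset.mem_filter]
    constructor
    · rintro ⟨_, hne⟩
      by_contra hmem
      exact hne (by rw [hind]; simp [hmem])
    · intro hmem
      refine ⟨Finset.mem_univ i, ?_⟩
      rw [hind]
      simp [hmem]
  calc (G.adjMatrix ℝ).rank = (X + Xᵀ).rank := by rw [← hXA]
    _ ≤ X.rank + Xᵀ.rank := matrank_add_le X Xᵀ
    _ = X.rank + X.rank := by rw [Matrix.rank_transpose]
    _ ≤ V₁.card + V₁.card := add_le_add hrankX hrankX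
    _ = 2 * V₁.card := by ring

include hdisj hbip in
lemma sum_deg_V₂ (hcover : V₁ ∪ V₂ = Finset.univ) :
    ∑ v ∈ V₂, (G.degree v : ℝ) = (G.edgeFinset.card : ℝ) := by
  have hW : ∀ (W W' : Finset (Fin n)),
      (∀ {v u : Fin n}, v ∈ W → u ∉ W' → G.adjMatrix ℝ v u = 0) →
      ∑ v ∈ W, (G.degree v : ℝ) = ∑ v ∈ W, ∑ u ∈ W', G.adjMatrix ℝ v u := by
    intro W W' hzero
    refine Finset.sum_congr rfl fun v hv => ?_
    rw [← adj_row_sum G v]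
    symm
    refine Finset.sum_subset (Finset.subset_univ W') fun u _ hu => hzero hv hu
  have h1 := hW V₂ V₁ (fun hv hu => adj_zero_of_snd_not_mem₁ G V₁ V₂ hdisj hbip hv hu)
  have h2 := hW V₁ V₂ (fun hv hu => adj_zero_of_snd_not_mem₂ G V₁ V₂ hdisj hbip hv hu)
  have heq : ∑ v ∈ V₂, (G.degree v : ℝ) = ∑ v ∈ V₁, (G.degree v : ℝ) := by
    rw [h1, h2]; refine Finset.sum_comm.trans ?_
    refine Finset.sum_congr rfl fun u _ => Finset.sum_congr rfl fun v _ => adj_sym G v u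
  have htot : ∑ v ∈ V₁, (G.degree v : ℝ) + ∑ v ∈ V₂, (G.degree v : ℝ)
      = 2 * (G.edgeFinset.card : ℝ) := by
    rw [← Finset.sum_union hdisj, hcover, ← Nat.cast_sum,
      G.sum_degrees_eq_twice_card_edges]
    push_cast
    ring
  linarith

lemma deg_pos_of_conn (hconn : G.Connected) (hΔ : 0 < G.maxDegree) (v : Fin n) :
    0 < G.degree v := by
  have hne : Nonempty (Fin n) := hconn.nonempty
  obtain ⟨w, hw⟩ := G.exists_maximal_degree_vertex
  rw [SimpleGraph.degree_pos_iff_exists_adj]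
  by_cases hvw : v = w
  · subst hvw
    rw [← SimpleGraph.degree_pos_iff_exists_adj]
    exact hw ▸ hΔ
  · obtain ⟨p⟩ := hconn.preconnected v w
    cases p with
    | nil => exact absurd rfl hvw
    | cons h q => exact ⟨_, h⟩

end bip

theorem stmt_15 {n : ℕ} (G : SimpleGraph (Fin n)) [DecidableRel G.Adj]
    (hconn : G.Connected)
    (V₁ V₂ : Finset (Fin n)) (hdisj : Disjoint V₁ V₂) (hcover : V₁ ∪ V₂ = Finset.univ)
    (hbip : ∀ u v : Fin n, G.Adj u v → (u ∈ V₁ ∧ v ∈ V₂) ∨ (u ∈ V₂ ∧ v ∈ V₁))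
    (n₁ n₂ m : ℕ) (hn₁ : n₁ = V₁.card) (hn₂ : n₂ = V₂.card)
    (hm : m = G.edgeFinset.card) :
    2 * ((n₂ : ℝ) - 1 + Real.sqrt ((m : ℝ) - (n₂ : ℝ) + 1)) / Real.sqrt (G.maxDegree) ≤
      graphEnergy G ∧
    graphEnergy G ≤ 2 * Real.sqrt ((n₁ : ℝ) * (m : ℝ)) := by
  constructor
  · -- lower bound
    by_cases hΔ0 : G.maxDegree = 0
    · rw [hΔ0]
      simp only [Nat.cast_zero, Real.sqrt_zero, div_zero]
      exact Finset.sum_nonneg fun v _ => vertexEnergy_nonneg G v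
    · have hΔpos : 0 < G.maxDegree := Nat.pos_of_ne_zero hΔ0
      have hΔr : (0:ℝ) < (G.maxDegree : ℝ) := by exact_mod_cast hΔpos
      have hsΔ : 0 < Real.sqrt (G.maxDegree : ℝ) := Real.sqrt_pos.mpr hΔr
      have hdeg : ∀ v, 0 < G.degree v := deg_pos_of_conn G hconn hΔpos
      have hpv : ∀ v : Fin n,
          Real.sqrt (G.degree v) / Real.sqrt (G.maxDegree) ≤ vertexEnergy G v := by
        intro v
        rw [div_le_iff₀ hsΔ]
        have h2 : ((G.degree v : ℝ)) ≤ (vertexEnergy G v * Real.sqrt (G.maxDegree))^2 := by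
          rw [mul_pow, Real.sq_sqrt hΔr.le]
          exact pervertex G v
        have h3 := Real.sqrt_le_sqrt h2
        rwa [Real.sqrt_sq
          (mul_nonneg (vertexEnergy_nonneg G v) (Real.sqrt_nonneg _))] at h3
      have hsa := sqrt_superadd V₂ (fun v => (G.degree v : ℝ))
        (fun v _ => by show (1:ℝ) ≤ (G.degree v : ℝ); exact_mod_cast hdeg v)
      rw [sum_deg_V₂ G V₁ V₂ hdisj hbip hcover] at hsa
      have hsplit : graphEnergy G = 2 * ∑ v ∈ V₂, vertexEnergy G v := by
        rw [graphEnergy,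
          show (Finset.univ : Finset (Fin n)) = V₁ ∪ V₂ from hcover.symm,
          Finset.sum_union hdisj, ← energy_half_split G V₁ V₂ hdisj hbip]
        ring
      rw [hsplit, hn₂, hm]
      calc 2 * ((V₂.card : ℝ) - 1 +
              Real.sqrt ((G.edgeFinset.card : ℝ) - (V₂.card : ℝ) + 1)) /
            Real.sqrt (G.maxDegree)
          ≤ 2 * (∑ v ∈ V₂, Real.sqrt (G.degree v)) / Real.sqrt (G.maxDegree) := by
            apply div_le_div_of_nonneg_right ?_ hsΔ.le
            · linarith [hsa]
        _ = 2 * ∑ v ∈ V₂, (Real.sqrt (G.degree v) / Real.sqrt (G.maxDegree)) := by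
            rw [mul_div_assoc, Finset.sum_div]
        _ ≤ 2 * ∑ v ∈ V₂, vertexEnergy G v := by
            have h := Finset.sum_le_sum (fun v (_ : v ∈ V₂) => hpv v)
            linarith
  · -- upper bound
    rw [graphEnergy_eq_sum_abs, hn₁, hm]
    set ν := (adjHerm G).eigenvalues with hνdef
    set t := Finset.univ.filter (fun i => ν i ≠ 0) with ht
    have hsum_t : ∑ i, |ν i| = ∑ i ∈ t, |ν i| := by
      symm
      exact Finset.sum_filter_of_ne (fun i _ h => abs_ne_zero.mp h)
    have c1 : (∑ i ∈ t, |ν i|)^2 ≤ (t.card : ℝ) * ∑ i ∈ t, (ν i)^2 := by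
      have h := sq_sum_le_card_mul_sum_sq (s := t) (f := fun i => |ν i|)
      simpa [sq_abs] using h
    have c2 : ∑ i ∈ t, (ν i)^2 ≤ 2 * (G.edgeFinset.card : ℝ) := by
      rw [← sum_eigsq G]
      exact Finset.sum_le_sum_of_subset_of_nonneg (Finset.filter_subset _ _)
        (fun i _ _ => sq_nonneg _)
    have c3 : (t.card : ℝ) ≤ 2 * (V₁.card : ℝ) := by
      have hr := rank_le_two_card G V₁ V₂ hdisj hbip
      have he : (G.adjMatrix ℝ).rank = t.card := by
        rw [(adjHerm G).rank_eq_card_non_zero_eigs, Fintype.card_subtype]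
      rw [he] at hr
      exact_mod_cast hr
    have c4 : (∑ i ∈ t, |ν i|)^2
        ≤ (2 * (V₁.card : ℝ)) * (2 * (G.edgeFinset.card : ℝ)) := by
      refine c1.trans (mul_le_mul c3 c2 ?_ (by positivity))
      exact Finset.sum_nonneg fun i _ => sq_nonneg _
    rw [hsum_t]
    refine (Real.le_sqrt_of_sq_le c4).trans (le_of_eq ?_)
    rw [show (2 * (V₁.card : ℝ)) * (2 * (G.edgeFinset.card : ℝ))
        = 2^2 * ((V₁.card : ℝ) * (G.edgeFinset.card : ℝ)) from by ring,
      Real.sqrt_mul (by positivity), Real.sqrt_sq (by norm_num)]
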